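/- Let C be a δ-overlay of two ℝ-graphs X, X' in A_r with δ < r. Then for every (y,y') ∈ C, the pair of core projections (α(y), α(y')) lies in the 2δ-enlargement C_{2δ} of C. -/

import Mathlib

open MeasureTheory
open scoped ENNReal
open Set Metric

/-- Geodesic metric space: any two points are joined by an isometric path. -/
def IsGeodesicSpace (X : Type) [MetricSpace X] : Prop :=
  ∀ x y : X, ∃ f : ℝ → X, f 0 = x ∧ f (dist x y) = y ∧
    ∀ s ∈ Icc (0 : ℝ) (dist x y), ∀ t ∈ Icc (0 : ℝ) (dist x y),
      dist (f s) (f t) = |s - t|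

/-- No embedded cycle: no continuous injective image of the circle. -/
def NoEmbeddedCycle (X : Type) [TopologicalSpace X] : Prop :=
  ¬ ∃ f : AddCircle (1 : ℝ) → X, Continuous f ∧ Function.Injective f

/-- A subset is an ℝ-tree if, in the induced metric, it is an acyclic
geodesic space. -/
def IsRTreeSet {X : Type} [MetricSpace X] (A : Set X) : Prop :=
  IsGeodesicSpace ↥A ∧ NoEmbeddedCycle ↥A

/-- An ℝ-graph: a compact geodesic metric space which is locally an
ℝ-tree. -/
def IsRGraph (X : Type) [MetricSpace X] : Prop :=
  CompactSpace X ∧ IsGeodesicSpace X ∧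
    ∀ x : X, ∃ ε > (0 : ℝ), IsRTreeSet (ball x ε)

/-- An embedded cycle: the range of a continuous injective map from the
circle. -/
def IsEmbCycle {X : Type} [TopologicalSpace X] (c : Set X) : Prop :=
  ∃ f : AddCircle (1 : ℝ) → X, Continuous f ∧ Function.Injective f ∧
    Set.range f = c

/-- The core of `X`: the union of all simple arcs having both endpoints in
embedded cycles of `X`. -/
def core (X : Type) [MetricSpace X] : Set X :=
  {y | ∃ f : ℝ → X, ContinuousOn f (Icc 0 1) ∧ InjOn f (Icc 0 1) ∧
    (∃ c, IsEmbCycle c ∧ f 0 ∈ c) ∧ (∃ c, IsEmbCycle c ∧ f 1 ∈ c) ∧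
    y ∈ f '' Icc 0 1}

/-- The punctured ball of radius `δ` at `x`, relative to `Y`. -/
def punctured {X : Type} [MetricSpace X] (Y : Set X) (x : X) (δ : ℝ) : Set X :=
  (ball x δ ∩ Y) \ {x}

/-- `x` has degree `n` in `Y ⊆ X`: for all small enough `δ`, the punctured
ball `(B_δ(x) ∩ Y) \ {x}` has exactly `n` connected components. -/
def HasDegreeIn {X : Type} [MetricSpace X] (Y : Set X) (x : X) (n : ℕ∞) : Prop :=
  ∃ ε > (0 : ℝ), ∀ δ ∈ Ioc (0 : ℝ) ε,
    ENat.card (ConnectedComponents ↥(punctured Y x δ)) = n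

/-- `x` has degree at least `m` in `Y ⊆ X`. -/
def DegreeAtLeast {X : Type} [MetricSpace X] (Y : Set X) (x : X) (m : ℕ∞) : Prop :=
  ∃ ε > (0 : ℝ), ∀ δ ∈ Ioc (0 : ℝ) ε,
    m ≤ ENat.card (ConnectedComponents ↥(punctured Y x δ))

/-- `X` contains at least `n` independent embedded cycles. -/
def HasSurplusAtLeast (X : Type) [MetricSpace X] (n : ℕ) : Prop :=
  ∃ c : Fin n → Set X, (∀ i, IsEmbCycle (c i)) ∧
    ∀ i : Fin n, ¬ (c i ⊆ ⋃ j : Fin n, ⋃ (_ : j < i), c j)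

/-- The surplus of `X` is exactly `n`: the maximal number of independent
embedded cycles. -/
def HasSurplus (X : Type) [MetricSpace X] (n : ℕ) : Prop :=
  HasSurplusAtLeast X n ∧ ¬ HasSurplusAtLeast X (n + 1)

/-- A correspondence between `X` and `X'`. -/
def IsCorrespondence {X X' : Type} (C : Set (X × X')) : Prop :=
  (∀ x : X, ∃ x' : X', (x, x') ∈ C) ∧ ∀ x' : X', ∃ x : X, (x, x') ∈ C

/-- The distortion of `C`, in `ℝ≥0∞`. -/
noncomputable def distortion {X X' : Type} [MetricSpace X] [MetricSpace X']
    (C : Set (X × X')) : ℝ≥0∞ :=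
  ⨆ p ∈ C, ⨆ q ∈ C,
    (edist p.1 q.1 - edist p.2 q.2) ⊔ (edist p.2 q.2 - edist p.1 q.1)

/-- The `r`-enlargement of `C`. -/
def enlargement {X X' : Type} [MetricSpace X] [MetricSpace X']
    (C : Set (X × X')) (r : ℝ) : Set (X × X') :=
  {q | ∃ p ∈ C, dist p.1 q.1 ≤ r ∧ dist p.2 q.2 ≤ r}

/-- `X ∈ A_r`: surplus at most `1/r`, total core length at most `1/r`, and
every kernel edge (simple arc in the core joining branchpoints, with no
interior branchpoint) has length at least `r`. -/
def InAr (X : Type) [MetricSpace X] [MeasurableSpace X] [BorelSpace X]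
    (r : ℝ) : Prop :=
  ¬ HasSurplusAtLeast X (⌊1 / r⌋₊ + 1) ∧
  Measure.hausdorffMeasure 1 (core X) ≤ ENNReal.ofReal (1 / r) ∧
  ∀ (f : ℝ → X) (a b : ℝ), a < b → ContinuousOn f (Icc a b) →
    InjOn f (Icc a b) → f '' Icc a b ⊆ core X →
    DegreeAtLeast Set.univ (f a) 3 → DegreeAtLeast Set.univ (f b) 3 →
    (∀ t ∈ Ioo a b, HasDegreeIn Set.univ (f t) 2) →
    ENNReal.ofReal r ≤ eVariationOn f (Icc a b)

/-- `C` is a `δ`-overlay of `X` and `X'`: a correspondence of distortion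
less than `δ` matching branchpoints with branchpoints and putting the cores
in correspondence. -/
def IsOverlay {X X' : Type} [MetricSpace X] [MetricSpace X']
    (δ : ℝ) (C : Set (X × X')) : Prop :=
  IsCorrespondence C ∧ distortion C < ENNReal.ofReal δ ∧
  (∀ y ∈ core X, ∃ y' ∈ core X', (y, y') ∈ C) ∧
  (∀ y' ∈ core X', ∃ y ∈ core X, (y, y') ∈ C) ∧
  (∀ v : X, DegreeAtLeast Set.univ v 3 →
    ∃ v' : X', DegreeAtLeast Set.univ v' 3 ∧ (v, v') ∈ C) ∧
  (∀ v' : X', DegreeAtLeast Set.univ v' 3 →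
    ∃ v : X, DegreeAtLeast Set.univ v 3 ∧ (v, v') ∈ C)

set_option linter.unusedSectionVars false

namespace OverlayAux
set_option linter.unusedSectionVars false

variable {X : Type} [MetricSpace X]

/-- Reparametrized restriction of `f` to the (possibly reversed) interval from `a` to `b`. -/
noncomputable def seg (f : ℝ → X) (a b : ℝ) : ℝ → X := fun t => f (a + t * (b - a))

lemma seg_zero (f : ℝ → X) (a b : ℝ) : seg f a b 0 = f a := by simp [seg]

lemma seg_one (f : ℝ → X) (a b : ℝ) : seg f a b 1 = f b := by simp [seg]

lemma aff_image (a b : ℝ) : (fun t : ℝ => a + t * (b - a)) '' Icc 0 1 = uIcc a b := by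
  rw [← segment_eq_uIcc, segment_eq_image']
  simp [smul_eq_mul]

lemma seg_image (f : ℝ → X) (a b : ℝ) : seg f a b '' Icc 0 1 = f '' uIcc a b := by
  have h : seg f a b = f ∘ (fun t : ℝ => a + t * (b - a)) := rfl
  rw [h, Set.image_comp, aff_image]

lemma seg_contOn {f : ℝ → X} {a b : ℝ} (hf : ContinuousOn f (uIcc a b)) :
    ContinuousOn (seg f a b) (Icc 0 1) := by
  apply hf.comp ((continuous_const.add (continuous_id.mul continuous_const)).continuousOn)
  intro t ht
  rw [← aff_image a b]
  exact Set.mem_image_of_mem _ ht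

lemma seg_injOn {f : ℝ → X} {a b : ℝ} (hf : InjOn f (uIcc a b)) (hab : a ≠ b) :
    InjOn (seg f a b) (Icc 0 1) := by
  intro s hs t ht h
  have hs' : a + s * (b - a) ∈ uIcc a b := by
    rw [← aff_image a b]; exact Set.mem_image_of_mem _ hs
  have ht' : a + t * (b - a) ∈ uIcc a b := by
    rw [← aff_image a b]; exact Set.mem_image_of_mem _ ht
  have h2 := hf hs' ht' h
  have hba : b - a ≠ 0 := sub_ne_zero.mpr (Ne.symm hab)
  have : s * (b - a) = t * (b - a) := by linarith
  exact mul_right_cancel₀ hba this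

lemma uIcc_sub_Icc {a b lo hi : ℝ} (ha : a ∈ Icc lo hi) (hb : b ∈ Icc lo hi) :
    uIcc a b ⊆ Icc lo hi := by
  rw [uIcc]
  exact Icc_subset_Icc (le_inf ha.1 hb.1) (sup_le ha.2 hb.2)


variable {X : Type} [MetricSpace X]

noncomputable def cat (f g : ℝ → X) : ℝ → X :=
  fun t => if t ≤ 1/2 then f (2*t) else g (2*t - 1)

lemma cat_apply_le {f g : ℝ → X} {t : ℝ} (h : t ≤ 1/2) : cat f g t = f (2*t) := by
  simp only [cat]; rw [if_pos h]

lemma cat_apply_gt {f g : ℝ → X} {t : ℝ} (h : ¬ t ≤ 1/2) : cat f g t = g (2*t - 1) := by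
  simp only [cat]; rw [if_neg h]

lemma cat_zero (f g : ℝ → X) : cat f g 0 = f 0 := by
  rw [cat_apply_le (by norm_num)]; norm_num

lemma cat_one (f g : ℝ → X) : cat f g 1 = g 1 := by
  rw [cat_apply_gt (by norm_num)]; norm_num

lemma cat_half (f g : ℝ → X) : cat f g (1/2) = f 1 := by
  rw [cat_apply_le (by norm_num)]; norm_num

lemma cat_image {f g : ℝ → X} (hfg : f 1 = g 0) :
    cat f g '' Icc 0 1 = f '' Icc 0 1 ∪ g '' Icc 0 1 := by
  ext z
  constructor
  · rintro ⟨t, ht, rfl⟩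
    by_cases h : t ≤ 1/2
    · exact Or.inl ⟨2*t, ⟨by linarith [ht.1], by linarith⟩, (cat_apply_le h).symm⟩
    · exact Or.inr ⟨2*t - 1, ⟨by linarith [not_le.mp h], by linarith [ht.2]⟩,
        (cat_apply_gt h).symm⟩
  · rintro (⟨s, hs, rfl⟩ | ⟨s, hs, rfl⟩)
    · refine ⟨s/2, ⟨by linarith [hs.1], by linarith [hs.2]⟩, ?_⟩
      rw [cat_apply_le (by linarith [hs.2])]
      congr 1; ring
    · refine ⟨(s+1)/2, ⟨by linarith [hs.1], by linarith [hs.2]⟩, ?_⟩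
      by_cases h : (s+1)/2 ≤ 1/2
      · have hs0 : s = 0 := le_antisymm (by linarith) hs.1
        rw [cat_apply_le h, hs0]
        rw [show (2:ℝ) * ((0+1)/2) = 1 by norm_num, hfg]
      · rw [cat_apply_gt h]
        congr 1; ring

lemma contOn_union_closed {Y : Type} [TopologicalSpace Y] {f : ℝ → Y} {s t : Set ℝ}
    (hs : IsClosed s) (ht : IsClosed t)
    (hfs : ContinuousOn f s) (hft : ContinuousOn f t) : ContinuousOn f (s ∪ t) := by
  intro x hx
  have h1 : ContinuousWithinAt f s x := by
    by_cases h : x ∈ s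
    · exact hfs x h
    · exact continuousWithinAt_of_notMem_closure (by rwa [hs.closure_eq])
  have h2 : ContinuousWithinAt f t x := by
    by_cases h : x ∈ t
    · exact hft x h
    · exact continuousWithinAt_of_notMem_closure (by rwa [ht.closure_eq])
  exact h1.union h2

lemma cat_contOn {f g : ℝ → X} (hf : ContinuousOn f (Icc 0 1))
    (hg : ContinuousOn g (Icc 0 1)) (hfg : f 1 = g 0) :
    ContinuousOn (cat f g) (Icc 0 1) := by
  have c1 : ContinuousOn (cat f g) (Icc 0 (1/2)) := by
    apply ContinuousOn.congr (f := fun t => f (2*t))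
    · apply hf.comp (continuous_const.mul continuous_id).continuousOn
      intro t ht
      exact ⟨by simp; linarith [ht.1], by simp; linarith [ht.2]⟩
    · intro t ht
      exact cat_apply_le ht.2
  have c2 : ContinuousOn (cat f g) (Icc (1/2) 1) := by
    apply ContinuousOn.congr (f := fun t => g (2*t - 1))
    · apply hg.comp ((continuous_const.mul continuous_id).sub continuous_const).continuousOn
      intro t ht
      exact ⟨by simp; linarith [ht.1], by simp; linarith [ht.2]⟩
    · intro t ht
      by_cases h : t ≤ 1/2
      · have : t = 1/2 := le_antisymm h ht.1
        rw [cat_apply_le h, this]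
        norm_num [hfg]
      · exact cat_apply_gt h
  have := contOn_union_closed isClosed_Icc isClosed_Icc c1 c2
  apply this.mono
  intro x hx
  by_cases h : x ≤ 1/2
  · exact Or.inl ⟨hx.1, h⟩
  · exact Or.inr ⟨le_of_lt (not_le.mp h), hx.2⟩

lemma cat_injOn {f g : ℝ → X} (hf : InjOn f (Icc 0 1)) (hg : InjOn g (Icc 0 1))
    (hfg : f 1 = g 0) (hint : f '' Icc 0 1 ∩ g '' Icc 0 1 ⊆ {f 1}) :
    InjOn (cat f g) (Icc 0 1) := by
  have key : ∀ s t : ℝ, s ∈ Icc (0:ℝ) 1 → t ∈ Icc (0:ℝ) 1 → s ≤ 1/2 → ¬ t ≤ 1/2 →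
      cat f g s = cat f g t → s = t := by
    intro s t hs ht h1 h2 heq
    rw [cat_apply_le h1, cat_apply_gt h2] at heq
    have hm1 : (2*s : ℝ) ∈ Icc (0:ℝ) 1 := ⟨by linarith [hs.1], by linarith⟩
    have hm2 : (2*t - 1 : ℝ) ∈ Icc (0:ℝ) 1 := ⟨by linarith [not_le.mp h2], by linarith [ht.2]⟩
    have hmem : f (2*s) ∈ f '' Icc 0 1 ∩ g '' Icc 0 1 :=
      ⟨⟨2*s, hm1, rfl⟩, ⟨2*t-1, hm2, heq.symm⟩⟩
    have h3 : f (2*s) = f 1 := hint hmem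
    have h4 : 2*s = 1 := hf hm1 (by constructor <;> norm_num) h3
    have h5 : g (2*t-1) = g 0 := by rw [← heq, h3, hfg]
    have h6 : 2*t - 1 = 0 := hg hm2 (by constructor <;> norm_num) h5
    exfalso; apply h2; linarith
  intro s hs t ht heq
  by_cases h1 : s ≤ 1/2 <;> by_cases h2 : t ≤ 1/2
  · rw [cat_apply_le h1, cat_apply_le h2] at heq
    have := hf ⟨by linarith [hs.1], by linarith⟩ ⟨by linarith [ht.1], by linarith⟩ heq
    linarith
  · exact key s t hs ht h1 h2 heq
  · exact (key t s ht hs h2 h1 heq.symm).symm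
  · rw [cat_apply_gt h1, cat_apply_gt h2] at heq
    have := hg ⟨by linarith [not_le.mp h1], by linarith [hs.2]⟩
      ⟨by linarith [not_le.mp h2], by linarith [ht.2]⟩ heq
    linarith


lemma ext_arc {w t : ℝ → X} (hwc : ContinuousOn w (Icc 0 1)) (hwi : InjOn w (Icc 0 1))
    (htc : ContinuousOn t (Icc 0 1)) (ht0 : t 0 = w 1)
    (h : (∀ s ∈ Icc (0:ℝ) 1, t s = t 0) ∨
      (InjOn t (Icc 0 1) ∧ t '' Icc 0 1 ∩ w '' Icc 0 1 ⊆ {w 1})) :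
    ∃ w' : ℝ → X, ContinuousOn w' (Icc 0 1) ∧ InjOn w' (Icc 0 1) ∧
      w' 0 = w 0 ∧ w' 1 = t 1 ∧ w' '' Icc 0 1 = w '' Icc 0 1 ∪ t '' Icc 0 1 := by
  rcases h with hdeg | ⟨hti, hint⟩
  · refine ⟨w, hwc, hwi, rfl, ?_, ?_⟩
    · rw [hdeg 1 ⟨zero_le_one, le_refl 1⟩, ht0]
    · have himg : t '' Icc 0 1 = {w 1} := by
        ext z
        constructor
        · rintro ⟨s, hs, rfl⟩
          rw [hdeg s hs, ht0]; rfl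
        · rintro hz
          exact ⟨0, ⟨le_refl 0, zero_le_one⟩, by rw [ht0]; exact hz.symm ▸ rfl⟩
      rw [himg, Set.union_eq_self_of_subset_right]
      exact Set.singleton_subset_iff.mpr ⟨1, ⟨zero_le_one, le_refl 1⟩, rfl⟩
  · refine ⟨cat w t, cat_contOn hwc htc ht0.symm,
      cat_injOn hwi hti ht0.symm (by rw [Set.inter_comm]; exact hint),
      cat_zero w t, cat_one w t, cat_image ht0.symm⟩

lemma prep_arc {w t : ℝ → X} (hwc : ContinuousOn w (Icc 0 1)) (hwi : InjOn w (Icc 0 1))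
    (htc : ContinuousOn t (Icc 0 1)) (ht1 : t 1 = w 0)
    (h : (∀ s ∈ Icc (0:ℝ) 1, t s = t 0) ∨
      (InjOn t (Icc 0 1) ∧ t '' Icc 0 1 ∩ w '' Icc 0 1 ⊆ {w 0})) :
    ∃ w' : ℝ → X, ContinuousOn w' (Icc 0 1) ∧ InjOn w' (Icc 0 1) ∧
      w' 0 = t 0 ∧ w' 1 = w 1 ∧ w' '' Icc 0 1 = w '' Icc 0 1 ∪ t '' Icc 0 1 := by
  rcases h with hdeg | ⟨hti, hint⟩
  · refine ⟨w, hwc, hwi, ?_, rfl, ?_⟩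
    · rw [← ht1, hdeg 1 ⟨zero_le_one, le_refl 1⟩]
    · have himg : t '' Icc 0 1 = {w 0} := by
        ext z
        constructor
        · rintro ⟨s, hs, rfl⟩
          rw [hdeg s hs, ← ht1, hdeg 1 ⟨zero_le_one, le_refl 1⟩]; rfl
        · rintro hz
          exact ⟨1, ⟨zero_le_one, le_refl 1⟩, by rw [ht1]; exact hz.symm ▸ rfl⟩
      rw [himg, Set.union_eq_self_of_subset_right]
      exact Set.singleton_subset_iff.mpr ⟨0, ⟨le_refl 0, zero_le_one⟩, rfl⟩
  · refine ⟨cat t w, cat_contOn htc hwc ht1,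
      cat_injOn hti hwi ht1 (by rw [ht1]; exact hint),
      cat_zero t w, cat_one t w, by rw [cat_image ht1, Set.union_comm]⟩

/-- An injective arc with both endpoints on embedded cycles. -/
def ArcCyc (F : ℝ → X) : Prop :=
  ContinuousOn F (Icc 0 1) ∧ InjOn F (Icc 0 1) ∧
  (∃ c, IsEmbCycle c ∧ F 0 ∈ c) ∧ (∃ c, IsEmbCycle c ∧ F 1 ∈ c)

lemma arc_mem_core {F : ℝ → X} (hF : ArcCyc F) {z : X} (hz : z ∈ F '' Icc 0 1) :
    z ∈ core X :=
  ⟨F, hF.1, hF.2.1, hF.2.2.1, hF.2.2.2, hz⟩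

lemma one_mem01 : (1:ℝ) ∈ Icc (0:ℝ) 1 := ⟨zero_le_one, le_refl 1⟩
lemma zero_mem01 : (0:ℝ) ∈ Icc (0:ℝ) 1 := ⟨le_refl 0, zero_le_one⟩

lemma thetaA {E m : ℝ → X} (hE : ArcCyc E)
    (hmc : ContinuousOn m (Icc 0 1)) (hmi : InjOn m (Icc 0 1))
    (hint : m '' Icc 0 1 ∩ E '' Icc 0 1 ⊆ {m 0, m 1})
    {u u' : ℝ} (hu : u ∈ Icc (0:ℝ) 1) (hu' : u' ∈ Icc (0:ℝ) 1)
    (hEu : E u = m 0) (hEu' : E u' = m 1) (huu' : u < u') :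
    m '' Icc 0 1 ⊆ core X := by
  obtain ⟨hEc, hEi, hE0, hE1⟩ := hE
  have hsub1 : uIcc u' 1 ⊆ Icc (0:ℝ) 1 := uIcc_sub_Icc hu' one_mem01
  have hsub0 : uIcc 0 u ⊆ Icc (0:ℝ) 1 := uIcc_sub_Icc zero_mem01 hu
  -- step 1 : extend `m` on the right by the piece of `E` from `u'` to `1`
  obtain ⟨w₁, hw₁c, hw₁i, hw₁0, hw₁1, hw₁im⟩ :=
    ext_arc hmc hmi (seg_contOn (hEc.mono hsub1)) ((seg_zero E u' 1).trans hEu') (by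
      by_cases h1 : u' = 1
      · left
        intro s hs
        simp [seg, h1]
      · right
        refine ⟨seg_injOn (hEi.mono hsub1) h1, ?_⟩
        rw [seg_image]
        rintro z ⟨⟨ρ, hρ, rfl⟩, hzm⟩
        have hρ1 : ρ ∈ Icc (0:ℝ) 1 := hsub1 hρ
        have hρu' : u' ≤ ρ := by
          rw [uIcc_of_le hu'.2] at hρ
          exact hρ.1
        have hz2 : E ρ ∈ ({m 0, m 1} : Set X) := hint ⟨hzm, ⟨ρ, hρ1, rfl⟩⟩
        rcases hz2 with hz2 | hz2
        · exfalso
          have : ρ = u := hEi hρ1 hu (hz2.trans hEu.symm)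
          rw [this] at hρu'
          linarith
        · exact hz2)
  -- step 2 : extend on the left by the piece of `E` from `0` to `u`
  obtain ⟨W, hWc, hWi, hW0, hW1, hWim⟩ :=
    prep_arc hw₁c hw₁i (seg_contOn (hEc.mono hsub0))
      (by rw [seg_one, hEu, hw₁0]) (by
      by_cases h0 : u = 0
      · left
        intro s hs
        simp [seg, h0]
      · right
        refine ⟨seg_injOn (hEi.mono hsub0) (Ne.symm h0), ?_⟩
        rw [seg_image, hw₁im, seg_image]
        rintro z ⟨⟨ρ, hρ, rfl⟩, hzw⟩
        have hρ1 : ρ ∈ Icc (0:ℝ) 1 := hsub0 hρ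
        have hρu : ρ ≤ u := by
          rw [uIcc_of_le hu.1] at hρ
          exact hρ.2
        rcases hzw with hzm | ⟨ρ', hρ', hzE⟩
        · have hz2 : E ρ ∈ ({m 0, m 1} : Set X) := hint ⟨hzm, ⟨ρ, hρ1, rfl⟩⟩
          rcases hz2 with hz2 | hz2
          · rw [hw₁0]; exact hz2
          · exfalso
            have : ρ = u' := hEi hρ1 hu' (hz2.trans hEu'.symm)
            linarith
        · exfalso
          have hρ'1 : ρ' ∈ Icc (0:ℝ) 1 := hsub1 hρ'
          have hρ'u : u' ≤ ρ' := by
            rw [uIcc_of_le hu'.2] at hρ'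
            exact hρ'.1
          have : ρ' = ρ := hEi hρ'1 hρ1 hzE
          linarith)
  intro z hz
  apply arc_mem_core (F := W)
  · refine ⟨hWc, hWi, ?_, ?_⟩
    · obtain ⟨c, hc, hmem⟩ := hE0
      exact ⟨c, hc, by rwa [hW0, seg_zero]⟩
    · obtain ⟨c, hc, hmem⟩ := hE1
      exact ⟨c, hc, by rwa [hW1, hw₁1, seg_one]⟩
  · rw [hWim, hw₁im]
    exact Or.inl (Or.inl hz)

lemma thetaB {F G m : ℝ → X} (hF : ArcCyc F) (hG : ArcCyc G)
    (hmc : ContinuousOn m (Icc 0 1)) (hmi : InjOn m (Icc 0 1))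
    (hint : m '' Icc 0 1 ∩ (F '' Icc 0 1 ∪ G '' Icc 0 1) ⊆ {m 0, m 1})
    (hpF : m 0 ∈ F '' Icc 0 1) (hpG : m 0 ∉ G '' Icc 0 1)
    (hqG : m 1 ∈ G '' Icc 0 1) (hqF : m 1 ∉ F '' Icc 0 1) :
    m '' Icc 0 1 ⊆ core X := by
  have hintF : ∀ z, z ∈ m '' Icc 0 1 → z ∈ F '' Icc 0 1 → z = m 0 := by
    intro z h1 h2
    rcases hint ⟨h1, Or.inl h2⟩ with h | h
    · exact h
    · exact absurd (h ▸ h2) hqF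
  have hintG : ∀ z, z ∈ m '' Icc 0 1 → z ∈ G '' Icc 0 1 → z = m 1 := by
    intro z h1 h2
    rcases hint ⟨h1, Or.inr h2⟩ with h | h
    · exact absurd (h ▸ h2) hpG
    · exact h
  obtain ⟨u_p, hup, hFup⟩ := hpF
  obtain ⟨u_q, huq, hGuq⟩ := hqG
  have hGcpt : IsCompact (G '' Icc 0 1) := isCompact_Icc.image_of_continuousOn hG.1
  set H : Set ℝ := Icc 0 u_p ∩ F ⁻¹' (G '' Icc 0 1) with hHdef
  have hsubp : Icc 0 u_p ⊆ Icc (0:ℝ) 1 := Icc_subset_Icc_right hup.2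
  have hHclosed : IsClosed H :=
    (hF.1.mono hsubp).preimage_isClosed_of_isClosed isClosed_Icc hGcpt.isClosed
  rcases eq_empty_or_nonempty H with hHe | hHne
  · -- no crossing : tails `F|[0,u_p]` on the left and `G|[u_q,1]` on the right
    have hsub0 : uIcc 0 u_p ⊆ Icc (0:ℝ) 1 := uIcc_sub_Icc zero_mem01 hup
    have hsubq : uIcc u_q 1 ⊆ Icc (0:ℝ) 1 := uIcc_sub_Icc huq one_mem01
    obtain ⟨w₁, hw₁c, hw₁i, hw₁0, hw₁1, hw₁im⟩ :=
      prep_arc hmc hmi (seg_contOn (hF.1.mono hsub0)) ((seg_one F 0 u_p).trans hFup) (by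
        by_cases h0 : u_p = 0
        · left; intro s hs; simp [seg, h0]
        · right
          refine ⟨seg_injOn (hF.2.1.mono hsub0) (Ne.symm h0), ?_⟩
          rw [seg_image]
          rintro z ⟨⟨ρ, hρ, rfl⟩, hzm⟩
          exact hintF _ hzm ⟨ρ, hsub0 hρ, rfl⟩)
    obtain ⟨W, hWc, hWi, hW0, hW1, hWim⟩ :=
      ext_arc hw₁c hw₁i (seg_contOn (hG.1.mono hsubq))
        (by rw [seg_zero, hGuq, hw₁1]) (by
        by_cases h1 : u_q = 1
        · left; intro s hs; simp [seg, h1]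
        · right
          refine ⟨seg_injOn (hG.2.1.mono hsubq) h1, ?_⟩
          rw [seg_image, hw₁im, seg_image]
          rintro z ⟨⟨ρ, hρ, rfl⟩, hzw⟩
          rcases hzw with hzm | ⟨σ, hσ, hzF⟩
          · rw [hw₁1]
            exact hintG _ hzm ⟨ρ, hsubq hρ, rfl⟩
          · exfalso
            rw [uIcc_of_le hup.1] at hσ
            have : σ ∈ H := ⟨hσ, ⟨ρ, hsubq hρ, hzF.symm⟩⟩
            rw [hHe] at this
            exact this)
    intro z hz
    apply arc_mem_core (F := W)
    · refine ⟨hWc, hWi, ?_, ?_⟩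
      · obtain ⟨c, hc, hmem⟩ := hF.2.2.1
        exact ⟨c, hc, by rwa [hW0, hw₁0, seg_zero]⟩
      · obtain ⟨c, hc, hmem⟩ := hG.2.2.2
        exact ⟨c, hc, by rwa [hW1, seg_one]⟩
    · rw [hWim, hw₁im]
      exact Or.inl (Or.inl hz)
  · -- there is a crossing : reroute through `G`
    have hBdd : BddAbove H := BddAbove.mono Set.inter_subset_left bddAbove_Icc
    set w := sSup H with hwdef
    have hwH : w ∈ H := hHclosed.csSup_mem hHne hBdd
    have hwIcc : w ∈ Icc 0 u_p := hwH.1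
    have hw01 : w ∈ Icc (0:ℝ) 1 := hsubp hwIcc
    obtain ⟨ξ, hξ, hGξ⟩ := hwH.2
    have hw_lt : w < u_p := by
      rcases lt_or_eq_of_le hwIcc.2 with h | h
      · exact h
      · exfalso
        apply hpG
        rw [← hFup, ← h]
        exact hwH.2
    have hkey : ∀ σ, σ ∈ Icc w u_p → F σ ∈ G '' Icc 0 1 → σ = w := by
      intro σ hσ hσG
      have hmem : σ ∈ H := ⟨⟨le_trans hwIcc.1 hσ.1, hσ.2⟩, hσG⟩
      exact le_antisymm (le_csSup hBdd hmem) hσ.1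
    have hξq : ξ ≠ u_q := by
      intro h
      apply hqF
      rw [← hGuq, ← h, hGξ]
      exact ⟨w, hw01, rfl⟩
    have hsubw : uIcc w u_p ⊆ Icc (0:ℝ) 1 := uIcc_sub_Icc hw01 hup
    -- step 1 : prepend the piece of `F` from `w` to `u_p`
    obtain ⟨w₁, hw₁c, hw₁i, hw₁0, hw₁1, hw₁im⟩ :=
      prep_arc hmc hmi (seg_contOn (hF.1.mono hsubw)) ((seg_one F w u_p).trans hFup)
        (Or.inr ⟨seg_injOn (hF.2.1.mono hsubw) (ne_of_lt hw_lt), by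
          rw [seg_image]
          rintro z ⟨⟨ρ, hρ, rfl⟩, hzm⟩
          exact hintF _ hzm ⟨ρ, hsubw hρ, rfl⟩⟩)
    have hw₁0' : w₁ 0 = F w := by rw [hw₁0, seg_zero]
    have hFpart : ∀ z, z ∈ F '' uIcc w u_p → z ∈ G '' Icc 0 1 → z = F w := by
      rintro z ⟨σ, hσ, rfl⟩ hzG
      rw [uIcc_of_le (le_of_lt hw_lt)] at hσ
      rw [hkey σ hσ hzG]
    rcases lt_or_gt_of_ne hξq with hlt | hgt
    · -- `ξ < u_q` : go `G 0 ← ξ`, and `u_q → 1`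
      have hsubξ : uIcc 0 ξ ⊆ Icc (0:ℝ) 1 := uIcc_sub_Icc zero_mem01 hξ
      have hsubq : uIcc u_q 1 ⊆ Icc (0:ℝ) 1 := uIcc_sub_Icc huq one_mem01
      obtain ⟨w₂, hw₂c, hw₂i, hw₂0, hw₂1, hw₂im⟩ :=
        prep_arc hw₁c hw₁i (seg_contOn (hG.1.mono hsubξ))
          (by rw [seg_one, hGξ, hw₁0']) (by
          by_cases h0 : ξ = 0
          · left; intro s hs; simp [seg, h0]
          · right
            refine ⟨seg_injOn (hG.2.1.mono hsubξ) (Ne.symm h0), ?_⟩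
            rw [seg_image, hw₁im, seg_image]
            rintro z ⟨⟨ρ, hρ, rfl⟩, hzw⟩
            have hρξ : ρ ≤ ξ := by
              rw [uIcc_of_le hξ.1] at hρ
              exact hρ.2
            rcases hzw with hzm | hzF
            · exfalso
              have h1 : G ρ = m 1 := hintG _ hzm ⟨ρ, hsubξ hρ, rfl⟩
              have h2 : ρ = u_q := hG.2.1 (hsubξ hρ) huq (h1.trans hGuq.symm)
              linarith
            · rw [hw₁0']
              exact hFpart _ hzF ⟨ρ, hsubξ hρ, rfl⟩)
      obtain ⟨W, hWc, hWi, hW0, hW1, hWim⟩ :=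
        ext_arc hw₂c hw₂i (seg_contOn (hG.1.mono hsubq))
          (by rw [seg_zero, hGuq, hw₂1, hw₁1]) (by
          by_cases h1 : u_q = 1
          · left; intro s hs; simp [seg, h1]
          · right
            refine ⟨seg_injOn (hG.2.1.mono hsubq) h1, ?_⟩
            rw [seg_image, hw₂im, hw₁im, seg_image, seg_image]
            rintro z ⟨⟨ρ, hρ, rfl⟩, hzw⟩
            have hρq : u_q ≤ ρ := by
              rw [uIcc_of_le huq.2] at hρ
              exact hρ.1
            rw [hw₂1, hw₁1]
            rcases hzw with (hzm | hzF) | hzG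
            · exact hintG _ hzm ⟨ρ, hsubq hρ, rfl⟩
            · exfalso
              have h1 : G ρ = F w := hFpart _ hzF ⟨ρ, hsubq hρ, rfl⟩
              have h2 : ρ = ξ := hG.2.1 (hsubq hρ) hξ (h1.trans hGξ.symm)
              linarith
            · exfalso
              obtain ⟨ρ', hρ', hzz⟩ := hzG
              have hρ'ξ : ρ' ≤ ξ := by
                rw [uIcc_of_le hξ.1] at hρ'
                exact hρ'.2
              have : ρ' = ρ := hG.2.1 (hsubξ hρ') (hsubq hρ) hzz
              linarith)
      intro z hz
      apply arc_mem_core (F := W)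
      · refine ⟨hWc, hWi, ?_, ?_⟩
        · obtain ⟨c, hc, hmem⟩ := hG.2.2.1
          exact ⟨c, hc, by rwa [hW0, hw₂0, seg_zero]⟩
        · obtain ⟨c, hc, hmem⟩ := hG.2.2.2
          exact ⟨c, hc, by rwa [hW1, seg_one]⟩
      · rw [hWim, hw₂im, hw₁im]
        exact Or.inl (Or.inl (Or.inl hz))
    · -- `u_q < ξ` : go `G 1 ← ξ`, and `u_q → 0`
      have hsubξ : uIcc 1 ξ ⊆ Icc (0:ℝ) 1 := uIcc_sub_Icc one_mem01 hξ
      have hsubq : uIcc u_q 0 ⊆ Icc (0:ℝ) 1 := uIcc_sub_Icc huq zero_mem01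
      obtain ⟨w₂, hw₂c, hw₂i, hw₂0, hw₂1, hw₂im⟩ :=
        prep_arc hw₁c hw₁i (seg_contOn (hG.1.mono hsubξ))
          (by rw [seg_one, hGξ, hw₁0']) (by
          by_cases h0 : ξ = 1
          · left; intro s hs; simp [seg, h0]
          · right
            refine ⟨seg_injOn (hG.2.1.mono hsubξ) (fun h => h0 h.symm), ?_⟩
            rw [seg_image, hw₁im, seg_image]
            rintro z ⟨⟨ρ, hρ, rfl⟩, hzw⟩
            have hρξ : ξ ≤ ρ := by
              rw [uIcc_of_ge hξ.2] at hρ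
              exact hρ.1
            rcases hzw with hzm | hzF
            · exfalso
              have h1 : G ρ = m 1 := hintG _ hzm ⟨ρ, hsubξ hρ, rfl⟩
              have h2 : ρ = u_q := hG.2.1 (hsubξ hρ) huq (h1.trans hGuq.symm)
              linarith
            · rw [hw₁0']
              exact hFpart _ hzF ⟨ρ, hsubξ hρ, rfl⟩)
      obtain ⟨W, hWc, hWi, hW0, hW1, hWim⟩ :=
        ext_arc hw₂c hw₂i (seg_contOn (hG.1.mono hsubq))
          (by rw [seg_zero, hGuq, hw₂1, hw₁1]) (by
          by_cases h1 : u_q = 0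
          · left; intro s hs; simp [seg, h1]
          · right
            refine ⟨seg_injOn (hG.2.1.mono hsubq) h1, ?_⟩
            rw [seg_image, hw₂im, hw₁im, seg_image, seg_image]
            rintro z ⟨⟨ρ, hρ, rfl⟩, hzw⟩
            have hρq : ρ ≤ u_q := by
              rw [uIcc_of_ge huq.1] at hρ
              exact hρ.2
            rw [hw₂1, hw₁1]
            rcases hzw with (hzm | hzF) | hzG
            · exact hintG _ hzm ⟨ρ, hsubq hρ, rfl⟩
            · exfalso
              have h1 : G ρ = F w := hFpart _ hzF ⟨ρ, hsubq hρ, rfl⟩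
              have h2 : ρ = ξ := hG.2.1 (hsubq hρ) hξ (h1.trans hGξ.symm)
              linarith
            · exfalso
              obtain ⟨ρ', hρ', hzz⟩ := hzG
              have hρ'ξ : ξ ≤ ρ' := by
                rw [uIcc_of_ge hξ.2] at hρ'
                exact hρ'.1
              have : ρ' = ρ := hG.2.1 (hsubξ hρ') (hsubq hρ) hzz
              linarith)
      intro z hz
      apply arc_mem_core (F := W)
      · refine ⟨hWc, hWi, ?_, ?_⟩
        · obtain ⟨c, hc, hmem⟩ := hG.2.2.2
          exact ⟨c, hc, by rwa [hW0, hw₂0, seg_zero]⟩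
        · obtain ⟨c, hc, hmem⟩ := hG.2.2.1
          exact ⟨c, hc, by rwa [hW1, seg_one]⟩
      · rw [hWim, hw₂im, hw₁im]
        exact Or.inl (Or.inl (Or.inl hz))

lemma thetaA' {E m : ℝ → X} (hE : ArcCyc E)
    (hmc : ContinuousOn m (Icc 0 1)) (hmi : InjOn m (Icc 0 1))
    (hint : m '' Icc 0 1 ∩ E '' Icc 0 1 ⊆ {m 0, m 1})
    (hp : m 0 ∈ E '' Icc 0 1) (hq : m 1 ∈ E '' Icc 0 1) :
    m '' Icc 0 1 ⊆ core X := by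
  obtain ⟨u, hu, hEu⟩ := hp
  obtain ⟨u', hu', hEu'⟩ := hq
  have hne : u ≠ u' := by
    intro h
    have h2 : m 0 = m 1 := by rw [← hEu, ← hEu', h]
    have := hmi zero_mem01 one_mem01 h2
    norm_num at this
  rcases lt_or_gt_of_ne hne with h | h
  · exact thetaA ⟨hE.1, hE.2.1, hE.2.2.1, hE.2.2.2⟩ hmc hmi hint hu hu' hEu hEu' h
  · set R := seg m 1 0 with hR
    have huIcc : uIcc (1:ℝ) 0 = Icc (0:ℝ) 1 := uIcc_of_ge zero_le_one
    have hRc : ContinuousOn R (Icc 0 1) := seg_contOn (by rwa [huIcc])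
    have hRi : InjOn R (Icc 0 1) := seg_injOn (by rwa [huIcc]) one_ne_zero
    have hR0 : R 0 = m 1 := seg_zero m 1 0
    have hR1 : R 1 = m 0 := seg_one m 1 0
    have hRim : R '' Icc 0 1 = m '' Icc 0 1 := by rw [seg_image, huIcc]
    have hres := thetaA ⟨hE.1, hE.2.1, hE.2.2.1, hE.2.2.2⟩ hRc hRi (by
      rw [hRim, hR0, hR1]
      intro z hz
      rcases hint hz with h1 | h1
      · exact Or.inr h1
      · exact Or.inl h1) hu' hu (hEu'.trans hR0.symm) (hEu.trans hR1.symm) h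
    rwa [hRim] at hres

lemma theta {F G m : ℝ → X} (hF : ArcCyc F) (hG : ArcCyc G)
    (hmc : ContinuousOn m (Icc 0 1)) (hmi : InjOn m (Icc 0 1))
    (hint : m '' Icc 0 1 ∩ (F '' Icc 0 1 ∪ G '' Icc 0 1) ⊆ {m 0, m 1})
    (hp : m 0 ∈ F '' Icc 0 1 ∪ G '' Icc 0 1)
    (hq : m 1 ∈ F '' Icc 0 1 ∪ G '' Icc 0 1) :
    m '' Icc 0 1 ⊆ core X := by
  have hintF : m '' Icc 0 1 ∩ F '' Icc 0 1 ⊆ {m 0, m 1} :=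
    fun z hz => hint ⟨hz.1, Or.inl hz.2⟩
  have hintG : m '' Icc 0 1 ∩ G '' Icc 0 1 ⊆ {m 0, m 1} :=
    fun z hz => hint ⟨hz.1, Or.inr hz.2⟩
  by_cases hpF : m 0 ∈ F '' Icc 0 1
  · by_cases hqF : m 1 ∈ F '' Icc 0 1
    · exact thetaA' hF hmc hmi hintF hpF hqF
    · have hqG : m 1 ∈ G '' Icc 0 1 := hq.resolve_left hqF
      by_cases hpG : m 0 ∈ G '' Icc 0 1
      · exact thetaA' hG hmc hmi hintG hpG hqG
      · exact thetaB hF hG hmc hmi hint hpF hpG hqG hqF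
  · have hpG : m 0 ∈ G '' Icc 0 1 := hp.resolve_left hpF
    by_cases hqG : m 1 ∈ G '' Icc 0 1
    · exact thetaA' hG hmc hmi hintG hpG hqG
    · have hqF : m 1 ∈ F '' Icc 0 1 := hq.resolve_right hqG
      set R := seg m 1 0 with hR
      have huIcc : uIcc (1:ℝ) 0 = Icc (0:ℝ) 1 := uIcc_of_ge zero_le_one
      have hRc : ContinuousOn R (Icc 0 1) := seg_contOn (by rwa [huIcc])
      have hRi : InjOn R (Icc 0 1) := seg_injOn (by rwa [huIcc]) one_ne_zero
      have hR0 : R 0 = m 1 := seg_zero m 1 0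
      have hR1 : R 1 = m 0 := seg_one m 1 0
      have hRim : R '' Icc 0 1 = m '' Icc 0 1 := by rw [seg_image, huIcc]
      have hres := thetaB hF hG hRc hRi (by
        rw [hRim, hR0, hR1]
        intro z hz
        rcases hint hz with h1 | h1
        · exact Or.inr h1
        · exact Or.inl h1)
        (by rwa [hR0]) (by rwa [hR0]) (by rwa [hR1]) (by rwa [hR1])
      rwa [hRim] at hres

lemma geo_contOn {f : ℝ → X} {L : ℝ}
    (hiso : ∀ s ∈ Icc (0:ℝ) L, ∀ t ∈ Icc (0:ℝ) L, dist (f s) (f t) = |s - t|) :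
    ContinuousOn f (Icc 0 L) := by
  have hlip : LipschitzOnWith 1 f (Icc 0 L) := by
    intro s hs t ht
    rw [edist_dist, edist_dist, hiso s hs t ht, Real.dist_eq]
    simp
  exact hlip.continuousOn

/-- The gate property: the core projection lies on every geodesic from a point
to a point of the core. -/
lemma gate (hgeo : IsGeodesicSpace X) (y αy v : X)
    (hαc : αy ∈ core X) (hvc : v ∈ core X)
    (hdy : dist y αy = infDist y (core X)) :
    dist y αy + dist αy v ≤ dist y v := by
  obtain ⟨f, hf0, hfL, hfiso⟩ := hgeo y v
  obtain ⟨h, hh0, hha, hhiso⟩ := hgeo y αy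
  have ha0 : 0 ≤ dist y αy := dist_nonneg
  have hL0 : 0 ≤ dist y v := dist_nonneg
  have haL : dist y αy ≤ dist y v := by
    rw [hdy]; exact infDist_le_dist_of_mem hvc
  have hfc : ContinuousOn f (Icc 0 (dist y v)) := geo_contOn hfiso
  have hhc : ContinuousOn h (Icc 0 (dist y αy)) := geo_contOn hhiso
  have hdistf : ∀ σ ∈ Icc (0:ℝ) (dist y v), dist y (f σ) = σ := by
    intro σ hσ
    rw [← hf0, hfiso 0 ⟨le_refl 0, hL0⟩ σ hσ, zero_sub, abs_neg, abs_of_nonneg hσ.1]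
  have hdisth : ∀ σ ∈ Icc (0:ℝ) (dist y αy), dist y (h σ) = σ := by
    intro σ hσ
    rw [← hh0, hhiso 0 ⟨le_refl 0, ha0⟩ σ hσ, zero_sub, abs_neg, abs_of_nonneg hσ.1]
  set S : Set ℝ := Icc 0 (dist y αy) ∩ (fun t => dist (f t) (h t)) ⁻¹' {0} with hSdef
  have hScl : IsClosed S := by
    have hcd : ContinuousOn (fun t => dist (f t) (h t)) (Icc 0 (dist y αy)) :=
      by have := continuous_dist.comp_continuousOn ((hfc.mono (Icc_subset_Icc_right haL)).prodMk hhc); exact this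
    exact hcd.preimage_isClosed_of_isClosed isClosed_Icc isClosed_singleton
  have hS0 : (0:ℝ) ∈ S := by
    refine ⟨⟨le_refl 0, ha0⟩, ?_⟩
    simp only [Set.mem_preimage, Set.mem_singleton_iff, hf0, hh0, dist_self]
  have hSbdd : BddAbove S := BddAbove.mono Set.inter_subset_left bddAbove_Icc
  set t₀ := sSup S with ht₀def
  have ht₀S : t₀ ∈ S := hScl.csSup_mem ⟨0, hS0⟩ hSbdd
  have ht₀Icc : t₀ ∈ Icc (0:ℝ) (dist y αy) := ht₀S.1
  have ht₀e : f t₀ = h t₀ := by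
    have := ht₀S.2
    simp only [Set.mem_preimage, Set.mem_singleton_iff] at this
    exact dist_eq_zero.mp this
  by_cases hta : t₀ = dist y αy
  · have hfa : f (dist y αy) = αy := by
      rw [← hta, ht₀e, hta, hha]
    have hdv : dist αy v = |dist y αy - dist y v| := by
      have h2 := hfiso _ ⟨ha0, haL⟩ _ ⟨hL0, le_refl (dist y v)⟩
      rwa [hfa, hfL] at h2
    rw [hdv, abs_of_nonpos (by linarith)]
    linarith
  · exfalso
    have ht₀lt : t₀ < dist y αy := lt_of_le_of_ne ht₀Icc.2 hta
    have ht₀L : t₀ ∈ Icc (0:ℝ) (dist y v) := ⟨ht₀Icc.1, le_trans ht₀Icc.2 haL⟩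
    have hbcore : f t₀ ∉ core X := by
      intro hb
      have h1 : infDist y (core X) ≤ dist y (f t₀) := infDist_le_dist_of_mem hb
      rw [hdistf t₀ ht₀L, ← hdy] at h1
      linarith
    obtain ⟨F, hFc, hFi, hF0, hF1, hvF⟩ := hvc
    obtain ⟨G, hGc, hGi, hG0, hG1, hαG⟩ := hαc
    set U : Set X := F '' Icc 0 1 ∪ G '' Icc 0 1 with hUdef
    have hUcore : U ⊆ core X := by
      rintro z (hz | hz)
      · exact ⟨F, hFc, hFi, hF0, hF1, hz⟩
      · exact ⟨G, hGc, hGi, hG0, hG1, hz⟩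
    have hUcl : IsClosed U :=
      ((isCompact_Icc.image_of_continuousOn hFc).union
        (isCompact_Icc.image_of_continuousOn hGc)).isClosed
    -- first hitting time of U along f
    set T₁ : Set ℝ := Icc t₀ (dist y v) ∩ f ⁻¹' U with hT₁def
    have hT₁cl : IsClosed T₁ :=
      (hfc.mono (Icc_subset_Icc_left ht₀Icc.1)).preimage_isClosed_of_isClosed
        isClosed_Icc hUcl
    have hT₁mem : dist y v ∈ T₁ :=
      ⟨⟨le_trans ht₀Icc.2 haL, le_refl _⟩, by rw [Set.mem_preimage, hfL]; exact Or.inl hvF⟩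
    have hT₁bdd : BddBelow T₁ := BddBelow.mono Set.inter_subset_left bddBelow_Icc
    set t₁ := sInf T₁ with ht₁def
    have ht₁T : t₁ ∈ T₁ := hT₁cl.csInf_mem ⟨_, hT₁mem⟩ hT₁bdd
    have ht₁lb : ∀ u ∈ T₁, t₁ ≤ u := fun u hu => csInf_le hT₁bdd hu
    have ht₀t₁ : t₀ < t₁ := by
      rcases lt_or_eq_of_le ht₁T.1.1 with hlt | heq
      · exact hlt
      · exact absurd (hUcore (by rw [heq]; exact ht₁T.2)) hbcore
    -- first hitting time of U along h
    set S₁ : Set ℝ := Icc t₀ (dist y αy) ∩ h ⁻¹' U with hS₁def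
    have hS₁cl : IsClosed S₁ :=
      (hhc.mono (Icc_subset_Icc_left ht₀Icc.1)).preimage_isClosed_of_isClosed
        isClosed_Icc hUcl
    have hS₁mem : dist y αy ∈ S₁ :=
      ⟨⟨ht₀Icc.2, le_refl _⟩, by rw [Set.mem_preimage, hha]; exact Or.inr hαG⟩
    have hS₁bdd : BddBelow S₁ := BddBelow.mono Set.inter_subset_left bddBelow_Icc
    set s₁ := sInf S₁ with hs₁def
    have hs₁S : s₁ ∈ S₁ := hS₁cl.csInf_mem ⟨_, hS₁mem⟩ hS₁bdd
    have hs₁lb : ∀ u ∈ S₁, s₁ ≤ u := fun u hu => csInf_le hS₁bdd hu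
    have ht₀s₁ : t₀ < s₁ := by
      rcases lt_or_eq_of_le hs₁S.1.1 with hlt | heq
      · exact hlt
      · exact absurd (hUcore (by rw [ht₀e, heq]; exact hs₁S.2)) hbcore
    -- interval inclusions
    have hu1 : uIcc t₁ t₀ = Icc t₀ t₁ := uIcc_of_ge (le_of_lt ht₀t₁)
    have hu2 : uIcc t₀ s₁ = Icc t₀ s₁ := uIcc_of_le (le_of_lt ht₀s₁)
    have hsub1 : uIcc t₁ t₀ ⊆ Icc (0:ℝ) (dist y v) := by
      rw [hu1]; exact Icc_subset_Icc ht₀Icc.1 ht₁T.1.2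
    have hsub2 : uIcc t₀ s₁ ⊆ Icc (0:ℝ) (dist y αy) := by
      rw [hu2]; exact Icc_subset_Icc ht₀Icc.1 hs₁S.1.2
    have hsub2' : uIcc t₀ s₁ ⊆ Icc (0:ℝ) (dist y v) :=
      fun x hx => ⟨(hsub2 hx).1, le_trans (hsub2 hx).2 haL⟩
    have hfinj : InjOn f (Icc 0 (dist y v)) := by
      intro σ hσ τ hτ hστ
      have := hfiso σ hσ τ hτ
      rw [hστ, dist_self] at this
      have := abs_eq_zero.mp this.symm
      linarith
    have hhinj : InjOn h (Icc 0 (dist y αy)) := by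
      intro σ hσ τ hτ hστ
      have := hhiso σ hσ τ hτ
      rw [hστ, dist_self] at this
      have := abs_eq_zero.mp this.symm
      linarith
    -- the two halves of the arc through b
    have hkey : ∀ z, z ∈ f '' uIcc t₁ t₀ → z ∈ h '' uIcc t₀ s₁ → z = f t₀ := by
      rintro z ⟨σ, hσ, rfl⟩ ⟨τ, hτ, hzh⟩
      rw [hu1] at hσ
      rw [hu2] at hτ
      have hσL : σ ∈ Icc (0:ℝ) (dist y v) := ⟨le_trans ht₀Icc.1 hσ.1, le_trans hσ.2 ht₁T.1.2⟩
      have hτa : τ ∈ Icc (0:ℝ) (dist y αy) := ⟨le_trans ht₀Icc.1 hτ.1, le_trans hτ.2 hs₁S.1.2⟩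
      have h1 : dist y (f σ) = σ := hdistf σ hσL
      have h2 : dist y (h τ) = τ := hdisth τ hτa
      have hστ : σ = τ := by rw [← h1, ← h2, hzh]
      have hσS : σ ∈ S := by
        refine ⟨⟨hσL.1, le_trans (hστ ▸ hτ.2) hs₁S.1.2⟩, ?_⟩
        simp only [Set.mem_preimage, Set.mem_singleton_iff, dist_eq_zero]
        rw [← hzh, hστ]
      have : σ ≤ t₀ := le_csSup hSbdd hσS
      have hσt₀ : σ = t₀ := le_antisymm this hσ.1
      rw [hσt₀]
    set m := cat (seg f t₁ t₀) (seg h t₀ s₁) with hmdef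
    have hmid : seg f t₁ t₀ 1 = seg h t₀ s₁ 0 := by
      rw [seg_one, seg_zero, ht₀e]
    have hm0 : m 0 = f t₁ := (cat_zero _ _).trans (seg_zero f t₁ t₀)
    have hm1 : m 1 = h s₁ := (cat_one _ _).trans (seg_one h t₀ s₁)
    have hmc : ContinuousOn m (Icc 0 1) :=
      cat_contOn (seg_contOn (hfc.mono hsub1)) (seg_contOn (hhc.mono hsub2)) hmid
    have hmi : InjOn m (Icc 0 1) := by
      apply cat_injOn (seg_injOn (hfinj.mono hsub1) (ne_of_gt ht₀t₁))
        (seg_injOn (hhinj.mono hsub2) (ne_of_lt ht₀s₁)) hmid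
      rw [seg_image, seg_image, seg_one]
      rintro z ⟨hz1, hz2⟩
      exact hkey z hz1 hz2
    have hmim : m '' Icc 0 1 = f '' uIcc t₁ t₀ ∪ h '' uIcc t₀ s₁ := by
      rw [hmdef, cat_image hmid, seg_image, seg_image]
    have hint : m '' Icc 0 1 ∩ U ⊆ {m 0, m 1} := by
      rw [hmim]
      rintro z ⟨hz1 | hz1, hzU⟩
      · obtain ⟨σ, hσ, rfl⟩ := hz1
        rw [hu1] at hσ
        have hσT : σ ∈ T₁ := ⟨⟨hσ.1, le_trans hσ.2 ht₁T.1.2⟩, hzU⟩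
        have : σ = t₁ := le_antisymm hσ.2 (ht₁lb σ hσT)
        rw [this, ← hm0]
        exact Or.inl rfl
      · obtain ⟨σ, hσ, rfl⟩ := hz1
        rw [hu2] at hσ
        have hσT : σ ∈ S₁ := ⟨⟨hσ.1, le_trans hσ.2 hs₁S.1.2⟩, hzU⟩
        have : σ = s₁ := le_antisymm hσ.2 (hs₁lb σ hσT)
        rw [this, ← hm1]
        exact Or.inr rfl
    have hcore := theta (F := F) (G := G) ⟨hFc, hFi, hF0, hF1⟩ ⟨hGc, hGi, hG0, hG1⟩
      hmc hmi hint (by rw [hm0]; exact ht₁T.2) (by rw [hm1]; exact hs₁S.2)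
    apply hbcore
    apply hcore
    refine ⟨1/2, ⟨by norm_num, by norm_num⟩, ?_⟩
    rw [hmdef, cat_half, seg_one]

end OverlayAux

lemma OverlayAux.dist_bound {X X' : Type} [MetricSpace X] [MetricSpace X']
    {C : Set (X × X')} {δ : ℝ} (hδ : 0 < δ)
    (h : distortion C < ENNReal.ofReal δ) {p q : X × X'} (hp : p ∈ C) (hq : q ∈ C) :
    dist p.1 q.1 ≤ dist p.2 q.2 + δ ∧ dist p.2 q.2 ≤ dist p.1 q.1 + δ := by
  have hterm : ((edist p.1 q.1 - edist p.2 q.2) ⊔ (edist p.2 q.2 - edist p.1 q.1))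
      ≤ distortion C := by
    unfold distortion
    refine le_trans (le_iSup₂ (f := fun q' (_ : q' ∈ C) =>
      (edist p.1 q'.1 - edist p.2 q'.2) ⊔ (edist p.2 q'.2 - edist p.1 q'.1)) q hq) ?_
    exact le_iSup₂ (f := fun p' (_ : p' ∈ C) => ⨆ q' ∈ C,
      (edist p'.1 q'.1 - edist p'.2 q'.2) ⊔ (edist p'.2 q'.2 - edist p'.1 q'.1)) p hp
  have l1 : edist p.1 q.1 - edist p.2 q.2 ≤ ENNReal.ofReal δ :=
    le_of_lt (lt_of_le_of_lt (le_trans le_sup_left hterm) h)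
  have l2 : edist p.2 q.2 - edist p.1 q.1 ≤ ENNReal.ofReal δ :=
    le_of_lt (lt_of_le_of_lt (le_trans le_sup_right hterm) h)
  constructor
  · have e1 : edist p.1 q.1 ≤ ENNReal.ofReal δ + edist p.2 q.2 := tsub_le_iff_right.mp l1
    have e2 : ENNReal.ofReal (dist p.1 q.1) ≤ ENNReal.ofReal (δ + dist p.2 q.2) := by
      rw [ENNReal.ofReal_add hδ.le dist_nonneg, ← edist_dist, ← edist_dist]
      exact e1
    have e3 := (ENNReal.ofReal_le_ofReal_iff (by positivity)).mp e2
    linarith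
  · have e1 : edist p.2 q.2 ≤ ENNReal.ofReal δ + edist p.1 q.1 := tsub_le_iff_right.mp l2
    have e2 : ENNReal.ofReal (dist p.2 q.2) ≤ ENNReal.ofReal (δ + dist p.1 q.1) := by
      rw [ENNReal.ofReal_add hδ.le dist_nonneg, ← edist_dist, ← edist_dist]
      exact e1
    have e3 := (ENNReal.ofReal_le_ofReal_iff (by positivity)).mp e2
    linarith


/-- if `C` is a `δ`-overlay of two ℝ-graphs in `A_r` with
`δ < r`, then for `(y,y') ∈ C` the core projections satisfy
`(α(y), α(y')) ∈ C_{2δ}`. -/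
theorem overlay_core_projection
    {X X' : Type} [MetricSpace X] [MetricSpace X']
    [MeasurableSpace X] [BorelSpace X] [MeasurableSpace X'] [BorelSpace X']
    (hX : IsRGraph X) (hX' : IsRGraph X')
    (r : ℝ) (hr : 0 < r) (hAr : InAr X r) (hAr' : InAr X' r)
    (δ : ℝ) (hδ : 0 < δ) (hδr : δ < r)
    (C : Set (X × X')) (hC : IsOverlay δ C)
    (α : X → X)
    (hα : ∀ x : X, α x ∈ core X ∧ dist x (α x) = Metric.infDist x (core X) ∧
      ∀ z ∈ core X, dist x z = Metric.infDist x (core X) → z = α x)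
    (α' : X' → X')
    (hα' : ∀ x : X', α' x ∈ core X' ∧
      dist x (α' x) = Metric.infDist x (core X') ∧
      ∀ z ∈ core X', dist x z = Metric.infDist x (core X') → z = α' x) :
    ∀ y y', (y, y') ∈ C → (α y, α' y') ∈ enlargement C (2 * δ) := by
  intro y y' hyy'
  obtain ⟨hcorr, hdist, h3, h4, h5, h6⟩ := hC
  obtain ⟨hαcore, hαdist, -⟩ := hα y
  obtain ⟨hα'core, hα'dist, -⟩ := hα' y'
  obtain ⟨u', hu'core, hu'C⟩ := h3 (α y) hαcore
  obtain ⟨v, hvcore, hvC⟩ := h4 (α' y') hα'core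
  have hb1 := OverlayAux.dist_bound hδ hdist hyy' hu'C
  have hb2 := OverlayAux.dist_bound hδ hdist hyy' hvC
  have h1 : infDist y' (core X') ≤ dist y' u' := infDist_le_dist_of_mem hu'core
  have hgate := OverlayAux.gate hX.2.1 y (α y) v hαcore hvcore hαdist
  have hchain : dist (α y) v ≤ 2 * δ := by
    have e1 : dist y' u' ≤ dist y (α y) + δ := hb1.2
    have e2 : dist y v ≤ dist y' (α' y') + δ := hb2.1
    have e3 : dist y' (α' y') ≤ dist y' u' := by rw [hα'dist]; exact h1
    linarith
  refine ⟨(v, α' y'), hvC, ?_, ?_⟩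
  · simpa [dist_comm] using hchain
  · simp only [dist_self]
    linarith
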